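/- Let ξ ∈ ℝ and let g ∈ C²[a,b] with g(a) = g(b) = 0. Then |g(t)| ≤ (1/8)(b-a)² · max_{θ ∈ [a,b]} |g''(θ) - ξ² g(θ)| for all t ∈ [a,b]. -/

import Mathlib

open Real Set Filter Topology

lemma aux_second_deriv_nonneg {w w1 : ℝ → ℝ} {m c δ : ℝ} (hδ : 0 < δ)
    (hd : ∀ x ∈ Set.Ioo (m - δ) (m + δ), HasDerivAt w (w1 x) x)
    (hd1 : HasDerivAt w1 c m)
    (hmin : IsLocalMin w m) : 0 ≤ c := by
  by_contra hc
  push_neg at hc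
  have hm_mem : m ∈ Set.Ioo (m - δ) (m + δ) := ⟨by linarith, by linarith⟩
  have hw1m : w1 m = 0 := by
    have h1 : deriv w m = w1 m := (hd m hm_mem).deriv
    have h2 : deriv w m = 0 := hmin.deriv_eq_zero
    rw [h1] at h2; exact h2
  have hslope : Filter.Tendsto (slope w1 m) (𝓝[≠] m) (𝓝 c) :=
    hasDerivAt_iff_tendsto_slope.mp hd1
  have hev : ∀ᶠ x in 𝓝[≠] m, slope w1 m x < 0 := hslope.eventually_lt_const hc
  have hev2 : ∀ᶠ x in 𝓝[>] m, slope w1 m x < 0 :=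
    hev.filter_mono (nhdsWithin_mono m (fun x hx => ne_of_gt hx))
  have hev3 : ∀ᶠ x in 𝓝[>] m, w m ≤ w x := hmin.filter_mono nhdsWithin_le_nhds
  have hev4 : ∀ᶠ x in 𝓝[>] m, x < m + δ :=
    eventually_nhdsWithin_of_eventually_nhds (Filter.Tendsto.eventually_lt_const (by linarith) Filter.tendsto_id)
  obtain ⟨u, hu_mem, hu_sub⟩ :=
    mem_nhdsGT_iff_exists_Ioc_subset.mp ((hev2.and (hev3.and hev4)) : _)
  have hum : m < u := hu_mem
  have hu_all := hu_sub ⟨hum, le_refl u⟩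
  have huδ : u < m + δ := hu_all.2.2
  have hw1neg : ∀ x ∈ Set.Ioc m u, w1 x < 0 := by
    intro x hx
    have hs := (hu_sub hx).1
    rw [slope_def_field, hw1m, sub_zero] at hs
    have hxm : 0 < x - m := by linarith [hx.1]
    rcases div_neg_iff.mp hs with ⟨_, h⟩ | ⟨h, _⟩
    · linarith
    · exact h
  have hcont : ContinuousOn w (Set.Icc m u) := by
    intro x hx
    have hxδ : x ∈ Set.Ioo (m - δ) (m + δ) :=
      ⟨by linarith [hx.1], lt_of_le_of_lt hx.2 huδ⟩
    exact ((hd x hxδ).continuousAt).continuousWithinAt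
  have hanti : StrictAntiOn w (Set.Icc m u) := by
    apply strictAntiOn_of_deriv_neg (convex_Icc m u) hcont
    intro x hx
    rw [interior_Icc] at hx
    have hxδ : x ∈ Set.Ioo (m - δ) (m + δ) := ⟨by linarith [hx.1], by linarith [hx.2]⟩
    rw [(hd x hxδ).deriv]
    exact hw1neg x ⟨hx.1, hx.2.le⟩
  have h1 : w u < w m := hanti ⟨le_refl m, hum.le⟩ ⟨hum.le, le_refl u⟩ hum
  have h2 : w m ≤ w u := hu_all.2.1
  linarith

lemma aux_nonneg (a b ξ : ℝ) (hab : a < b) (w w1 w2 : ℝ → ℝ)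
    (hcont : ContinuousOn w (Set.Icc a b))
    (hd : ∀ x ∈ Set.Ioo a b, HasDerivAt w (w1 x) x)
    (hd1 : ∀ x ∈ Set.Ioo a b, HasDerivAt w1 (w2 x) x)
    (hwa : 0 ≤ w a) (hwb : 0 ≤ w b)
    (hL : ∀ x ∈ Set.Ioo a b, w2 x - ξ ^ 2 * w x < 0) :
    ∀ t ∈ Set.Icc a b, 0 ≤ w t := by
  obtain ⟨m, hm, hmin⟩ :=
    isCompact_Icc.exists_isMinOn (nonempty_Icc.mpr hab.le) hcont
  have hwm : 0 ≤ w m := by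
    rcases eq_or_lt_of_le hm.1 with h | hma
    · rw [← h]; exact hwa
    rcases eq_or_lt_of_le hm.2 with h | hmb
    · rw [h]; exact hwb
    -- interior case
    have hmIoo : m ∈ Set.Ioo a b := ⟨hma, hmb⟩
    have hloc : IsLocalMin w m := hmin.isLocalMin (Icc_mem_nhds hma hmb)
    by_contra hneg
    push_neg at hneg
    set δ := min (m - a) (b - m) with hδdef
    have hδ : 0 < δ := lt_min (by linarith) (by linarith)
    have hsub : Set.Ioo (m - δ) (m + δ) ⊆ Set.Ioo a b := by
      intro x hx
      constructor
      · have : a ≤ m - δ := by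
          have := min_le_left (m - a) (b - m); simp only [hδdef]; linarith [min_le_left (m - a) (b - m)]
        linarith [hx.1]
      · have : m + δ ≤ b := by linarith [min_le_right (m - a) (b - m)]
        linarith [hx.2]
    have h2 : 0 ≤ w2 m :=
      aux_second_deriv_nonneg hδ (fun x hx => hd x (hsub hx))
        (hd1 m hmIoo) hloc
    have hLm := hL m hmIoo
    nlinarith [sq_nonneg ξ, mul_nonpos_of_nonneg_of_nonpos (sq_nonneg ξ) hneg.le]
  intro t ht
  exact le_trans hwm (hmin ht)

theorem stmt_9 (ξ a b : ℝ) (hab : a < b)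
    (g : ℝ → ℝ) (hg : ContDiffOn ℝ 2 g (Set.Icc a b))
    (hga : g a = 0) (hgb : g b = 0)
    (K : ℝ)
    (hK : ∀ θ ∈ Set.Icc a b,
      |iteratedDerivWithin 2 g (Set.Icc a b) θ - ξ ^ 2 * g θ| ≤ K) :
    ∀ t ∈ Set.Icc a b, |g t| ≤ (1 / 8) * (b - a) ^ 2 * K := by
  set s := Set.Icc a b with hsdef
  have hs : UniqueDiffOn ℝ s := uniqueDiffOn_Icc hab
  have hK0 : 0 ≤ K := le_trans (abs_nonneg _) (hK a ⟨le_refl a, hab.le⟩)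
  set g1 := derivWithin g s with hg1def
  have hg1 : ContDiffOn ℝ 1 g1 s := hg.derivWithin hs (by norm_num)
  have hgd : ∀ x ∈ Set.Ioo a b, HasDerivAt g (g1 x) x := by
    intro x hx
    have hmem : s ∈ 𝓝 x := Icc_mem_nhds hx.1 hx.2
    have hdw : DifferentiableWithinAt ℝ g s x :=
      (hg.differentiableOn (by norm_num)) x (Ioo_subset_Icc_self hx)
    exact hdw.hasDerivWithinAt.hasDerivAt hmem
  have heq : ∀ x ∈ s, iteratedDerivWithin 2 g s x = derivWithin g1 s x := by
    intro x hx
    rw [show (2 : ℕ) = 1 + 1 from rfl, iteratedDerivWithin_succ]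
    exact derivWithin_congr (fun y hy => by rw [iteratedDerivWithin_one])
      (by rw [iteratedDerivWithin_one])
  have hD2 : ∀ x ∈ Set.Ioo a b, HasDerivAt g1 (iteratedDerivWithin 2 g s x) x := by
    intro x hx
    have hx' : x ∈ s := Ioo_subset_Icc_self hx
    have h1 : DifferentiableWithinAt ℝ g1 s x :=
      (hg1.differentiableOn (by norm_num)) x hx'
    rw [heq x hx']
    exact h1.hasDerivWithinAt.hasDerivAt (Icc_mem_nhds hx.1 hx.2)
  -- key claim
  have key : ∀ ε : ℝ, 0 < ε → ∀ σ : ℝ, σ = 1 ∨ σ = -1 →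
      ∀ x ∈ Set.Icc a b, 0 ≤ (K / 2 + ε) * ((x - a) * (b - x)) + σ * g x := by
    intro ε hε σ hσ
    set c := K / 2 + ε with hcdef
    clear_value c
    have hc : 0 < c := by rw [hcdef]; positivity
    apply aux_nonneg a b ξ hab _
      (fun x => c * (a + b - 2 * x) + σ * g1 x)
      (fun x => -2 * c + σ * iteratedDerivWithin 2 g s x)
    · exact (Continuous.continuousOn (by continuity)).add
        (continuousOn_const.mul hg.continuousOn)
    · intro x hx
      have hp : HasDerivAt (fun t : ℝ => c * ((t - a) * (b - t))) (c * (a + b - 2 * x)) x := by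
        have h1 : HasDerivAt (fun t : ℝ => (t - a) * (b - t)) (a + b - 2 * x) x := by
          have ha1 : HasDerivAt (fun t : ℝ => t - a) 1 x := (hasDerivAt_id x).sub_const a
          have ha2 : HasDerivAt (fun t : ℝ => b - t) (-1) x := (hasDerivAt_id x).const_sub b
          have := ha1.mul ha2
          exact this.congr_deriv (by ring)
        exact h1.const_mul c
      exact hp.add ((hgd x hx).const_mul σ)
    · intro x hx
      have hp : HasDerivAt (fun t : ℝ => c * (a + b - 2 * t)) (-2 * c) x := by
        have h1 : HasDerivAt (fun t : ℝ => a + b - 2 * t) (-2) x := by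
          have := ((hasDerivAt_id x).const_mul (2 : ℝ)).const_sub (a + b)
          simpa using this
        have := h1.const_mul c
        exact this.congr_deriv (by ring)
      exact hp.add ((hD2 x hx).const_mul σ)
    · have : (a - a) * (b - a) = 0 := by ring
      simp [hga, this]
    · have : (b - a) * (b - b) = 0 := by ring
      simp [hgb, this]
    · intro x hx
      have hx' : x ∈ s := Ioo_subset_Icc_self hx
      have hKx := abs_le.mp (hK x hx')
      have hq : 0 ≤ (x - a) * (b - x) :=
        mul_nonneg (by linarith [hx.1]) (by linarith [hx.2])
      have hξq : 0 ≤ ξ ^ 2 * (c * ((x - a) * (b - x))) :=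
        mul_nonneg (sq_nonneg ξ) (mul_nonneg hc.le hq)
      rcases hσ with h | h <;> subst h <;> nlinarith [hKx.1, hKx.2, hξq, hε, hcdef]
  intro t ht
  have hq0 : 0 ≤ (t - a) * (b - t) :=
    mul_nonneg (by linarith [ht.1]) (by linarith [ht.2])
  have hq_le : (t - a) * (b - t) ≤ (b - a) ^ 2 / 4 := by
    nlinarith [sq_nonneg ((t - a) - (b - t))]
  have habs : ∀ ε : ℝ, 0 < ε → |g t| ≤ (K / 2 + ε) * ((t - a) * (b - t)) := by
    intro ε hε
    have h1 := key ε hε 1 (Or.inl rfl) t ht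
    have h2 := key ε hε (-1) (Or.inr rfl) t ht
    rw [abs_le]
    constructor <;> nlinarith
  have hfin : ∀ ε : ℝ, 0 < ε → |g t| ≤ (1 / 8) * (b - a) ^ 2 * K + ε := by
    intro ε hε
    set B := (b - a) ^ 2 / 4 with hBdef
    have hB : 0 < B := div_pos (pow_pos (by linarith) 2) (by norm_num)
    have h := habs (ε / B) (div_pos hε hB)
    have hεB : (ε / B) * B = ε := div_mul_cancel₀ ε hB.ne'
    have hmul : (K / 2 + ε / B) * ((t - a) * (b - t)) ≤ (K / 2 + ε / B) * B :=
      mul_le_mul_of_nonneg_left hq_le (by have := div_pos hε hB; linarith)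
    nlinarith [h, hmul, hεB]
  exact le_of_forall_pos_le_add hfin
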